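/- For all integers p,q ≥ 3, the graph D(p,q) consisting of two cycles of lengths p and q sharing exactly one vertex has largest adjacency eigenvalue at least 3/√2. -/
import Mathlib


open scoped Classical

/-- The real adjacency matrix of a finite simple graph. -/
noncomputable def adjMat {V : Type*} [Fintype V] [DecidableEq V] (G : SimpleGraph V) :
    Matrix V V ℝ :=
  Matrix.of fun u v => if G.Adj u v then (1 : ℝ) else 0

/-- The eigenvalues (roots of the characteristic polynomial, with multiplicity) of a real
matrix, listed in nondecreasing order. -/
noncomputable def eigList {V : Type*} [Fintype V] [DecidableEq V] (A : Matrix V V ℝ) : List ℝ :=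
  A.charpoly.roots.sort (· ≤ ·)

/-- The `k`-th largest eigenvalue (with multiplicity) of `A`, 1-indexed:
`eig A 1 ≥ eig A 2 ≥ …`. -/
noncomputable def eig {V : Type*} [Fintype V] [DecidableEq V] (A : Matrix V V ℝ) (k : ℕ) : ℝ :=
  (eigList A).getD ((eigList A).length - k) 0

/-- The `k`-th largest adjacency eigenvalue of a finite simple graph (`λₖ(G)`). -/
noncomputable def graphEig {V : Type*} [Fintype V] [DecidableEq V] (G : SimpleGraph V)
    (k : ℕ) : ℝ :=
  eig (adjMat G) k

/-- The multiplicity of `μ` as an eigenvalue of `A` (dimension of the eigenspace). -/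
noncomputable def eigMult {V : Type*} [Fintype V] [DecidableEq V] (A : Matrix V V ℝ)
    (μ : ℝ) : ℕ :=
  Module.finrank ℝ (LinearMap.ker (A.mulVecLin - μ • LinearMap.id))

/-- The number of edges of a finite simple graph. -/
noncomputable def edgeCount {V : Type*} [Fintype V] (G : SimpleGraph V) : ℕ :=
  G.edgeSet.toFinite.toFinset.card

/-- The cyclomatic number `|E| - |V| + 1` of a (connected) finite graph. -/
noncomputable def cyclomatic {V : Type*} [Fintype V] (G : SimpleGraph V) : ℕ :=
  edgeCount G + 1 - Fintype.card V

/-- The maximum degree of a finite simple graph. -/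
noncomputable def maxDeg {V : Type*} [Fintype V] (G : SimpleGraph V) : ℕ :=
  Finset.univ.sup fun v => (G.neighborSet v).toFinite.toFinset.card

/-- The spider `T(ℓ,ℓ,ℓ)`: three paths of length `ℓ` (in edges) sharing exactly their
initial vertex `none`. -/
def spider (ℓ : ℕ) : SimpleGraph (Option (Fin 3 × Fin ℓ)) :=
  SimpleGraph.fromRel fun u v =>
    match u, v with
    | none, some (_, j) => (j : ℕ) = 0
    | some (i, j), some (i', j') => i = i' ∧ (j' : ℕ) = (j : ℕ) + 1
    | _, _ => False

/-- Figure-eight graph `D(p,q)`: two cycles of lengths `p` and `q` sharing exactly the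
vertex `none`. -/
def figureEight (p q : ℕ) : SimpleGraph (Option (Fin (p - 1) ⊕ Fin (q - 1))) :=
  SimpleGraph.fromRel fun u v =>
    match u, v with
    | none, some (Sum.inl i) => (i : ℕ) = 0 ∨ (i : ℕ) = p - 2
    | none, some (Sum.inr i) => (i : ℕ) = 0 ∨ (i : ℕ) = q - 2
    | some (Sum.inl i), some (Sum.inl j) => (j : ℕ) = (i : ℕ) + 1
    | some (Sum.inr i), some (Sum.inr j) => (j : ℕ) = (i : ℕ) + 1
    | _, _ => False

section Aux

open Polynomial Matrix
set_option linter.unusedSectionVars false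

variable {n : Type*} [Fintype n] [DecidableEq n]

private lemma charpolyDiagAux (d : n → ℝ) :
    (Matrix.diagonal d).charpoly = ∏ i, (X - C (d i)) := by
  have h : charmatrix (Matrix.diagonal d) = Matrix.diagonal (fun i => X - C (d i)) := by
    ext i j
    by_cases hij : i = j
    · subst hij; simp
    · simp [hij, Matrix.diagonal_apply_ne _ hij]
  rw [Matrix.charpoly, h, Matrix.det_diagonal]

private lemma charpolyConjAux (A U : Matrix n n ℝ) (hU2 : U * star U = 1) :
    (U * A * star U).charpoly = A.charpoly := by
  have hscal : ∀ M : Matrix n n ℝ, (C.mapMatrix M) * Matrix.scalar n (X : ℝ[X])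
      = Matrix.scalar n (X : ℝ[X]) * (C.mapMatrix M) :=
    fun M => (Matrix.scalar_commute (X : ℝ[X]) (Commute.all X) _).symm
  have key : charmatrix (U * A * star U) =
      ((C : ℝ →+* ℝ[X]).mapMatrix U) * charmatrix A * ((C : ℝ →+* ℝ[X]).mapMatrix (star U)) := by
    rw [charmatrix, charmatrix]
    rw [mul_sub, sub_mul]
    congr 1
    · rw [hscal U, mul_assoc, ← _root_.map_mul, hU2]
      simp
    · rw [← _root_.map_mul, ← _root_.map_mul]
  have hdet1 : ((C : ℝ →+* ℝ[X]).mapMatrix U).det * ((C : ℝ →+* ℝ[X]).mapMatrix (star U)).det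
      = 1 := by
    rw [← Matrix.det_mul, ← _root_.map_mul ((C : ℝ →+* ℝ[X]).mapMatrix), hU2, _root_.map_one,
      Matrix.det_one]
  calc (U * A * star U).charpoly
      = ((C : ℝ →+* ℝ[X]).mapMatrix U).det * (charmatrix A).det
        * ((C : ℝ →+* ℝ[X]).mapMatrix (star U)).det := by
        rw [Matrix.charpoly, key, Matrix.det_mul, Matrix.det_mul]
    _ = (charmatrix A).det * (((C : ℝ →+* ℝ[X]).mapMatrix U).det
        * ((C : ℝ →+* ℝ[X]).mapMatrix (star U)).det) := by ring
    _ = A.charpoly := by rw [hdet1, mul_one, Matrix.charpoly]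

private lemma charpolyHermitianAux (A : Matrix n n ℝ) (hA : A.IsHermitian) :
    A.charpoly = ∏ i, (X - C (hA.eigenvalues i)) := by
  set U : Matrix n n ℝ := (hA.eigenvectorUnitary : Matrix n n ℝ) with hUdef
  have hUmem : U ∈ unitary (Matrix n n ℝ) := (hA.eigenvectorUnitary).2
  have hU2 : U * star U = 1 := (Unitary.mem_iff.mp hUmem).2
  have hspec : A = U * Matrix.diagonal hA.eigenvalues * star U := by
    have := hA.spectral_theorem
    simpa [RCLike.ofReal_real_eq_id] using this
  calc A.charpoly = (U * Matrix.diagonal hA.eigenvalues * star U).charpoly := by rw [← hspec]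
    _ = (Matrix.diagonal hA.eigenvalues).charpoly := charpolyConjAux _ U hU2
    _ = ∏ i, (X - C (hA.eigenvalues i)) := charpolyDiagAux _

private lemma rootsProdAux (d : n → ℝ) :
    (∏ i, (X - C (d i))).roots = Finset.univ.val.map d := by
  rw [Finset.prod_eq_multiset_prod]
  have h : Multiset.map (fun i => X - C (d i)) Finset.univ.val
      = Multiset.map (fun a => X - C a) (Multiset.map d Finset.univ.val) := by
    rw [Multiset.map_map]; rfl
  rw [h]
  exact Polynomial.roots_multiset_prod_X_sub_C _

private lemma sortedMaxAux (l : List ℝ) (hl : l.Pairwise (· ≤ ·)) (a : ℝ) (ha : a ∈ l) :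
    a ≤ l.getD (l.length - 1) 0 := by
  obtain ⟨i, hi, rfl⟩ := List.getElem_of_mem ha
  have hlen : 0 < l.length := Nat.lt_of_le_of_lt (Nat.zero_le i) hi
  rw [List.getD_eq_getElem l 0 (by omega)]
  rcases Nat.lt_or_ge i (l.length - 1) with h | h
  · exact List.pairwise_iff_getElem.mp hl i (l.length - 1) hi (by omega) h
  · have : i = l.length - 1 := by omega
    subst this; exact le_refl _

private lemma rootLeEigAux (A : Matrix n n ℝ) (a : ℝ) (ha : a ∈ A.charpoly.roots) :
    a ≤ eig A 1 :=
  sortedMaxAux (eigList A) (Multiset.pairwise_sort _ _) a (by rwa [eigList, Multiset.mem_sort])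

private lemma vecMulEqAux (M : Matrix n n ℝ) (v : n → ℝ) : Matrix.vecMul v M = star M *ᵥ v := by
  ext i
  simp [Matrix.vecMul, Matrix.mulVec, dotProduct, Matrix.conjTranspose_apply, mul_comm]

private lemma rayleighAux (A : Matrix n n ℝ) (hA : A.IsHermitian) [Nonempty n] (x : n → ℝ) :
    x ⬝ᵥ (A *ᵥ x) ≤ eig A 1 * (x ⬝ᵥ x) := by
  have hroots : ∀ j, hA.eigenvalues j ∈ A.charpoly.roots := by
    intro j
    rw [charpolyHermitianAux A hA, rootsProdAux]
    exact Multiset.mem_map_of_mem _ (Finset.mem_val.mpr (Finset.mem_univ j))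
  set U : Matrix n n ℝ := (hA.eigenvectorUnitary : Matrix n n ℝ) with hUdef
  have hUmem : U ∈ unitary (Matrix n n ℝ) := (hA.eigenvectorUnitary).2
  have hU2 : U * star U = 1 := (Unitary.mem_iff.mp hUmem).2
  have hspec : A = U * Matrix.diagonal hA.eigenvalues * star U := by
    have := hA.spectral_theorem
    simpa [RCLike.ofReal_real_eq_id] using this
  set y : n → ℝ := star U *ᵥ x with hy
  have hQ : x ⬝ᵥ (A *ᵥ x) = ∑ i, hA.eigenvalues i * (y i)^2 := by
    conv_lhs => rw [hspec]
    rw [← Matrix.mulVec_mulVec, ← Matrix.mulVec_mulVec, Matrix.dotProduct_mulVec, vecMulEqAux,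
      ← hy]
    simp only [dotProduct, Matrix.mulVec_diagonal]
    exact Finset.sum_congr rfl fun i _ => by ring
  have hN : x ⬝ᵥ x = ∑ i, (y i)^2 := by
    have h1 : y ⬝ᵥ y = x ⬝ᵥ x := by
      rw [hy, Matrix.dotProduct_mulVec, vecMulEqAux, star_star, Matrix.mulVec_mulVec,
        hU2, Matrix.one_mulVec, dotProduct_comm]
    rw [← h1]
    simp [dotProduct, sq]
  obtain ⟨j, hj⟩ := Finite.exists_max hA.eigenvalues
  have hle : x ⬝ᵥ (A *ᵥ x) ≤ hA.eigenvalues j * (x ⬝ᵥ x) := by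
    rw [hQ, hN, Finset.mul_sum]
    apply Finset.sum_le_sum
    intro i _
    exact mul_le_mul_of_nonneg_right (hj i) (sq_nonneg _)
  refine hle.trans (mul_le_mul_of_nonneg_right (rootLeEigAux A _ (hroots j)) ?_)
  have h0 : (0:ℝ) ≤ ∑ i, (x i)^2 := Finset.sum_nonneg fun i _ => sq_nonneg _
  simpa [dotProduct, sq] using h0

private lemma adjMatHermitianAux {V : Type*} [Fintype V] [DecidableEq V] (G : SimpleGraph V) :
    (adjMat G).IsHermitian := by
  ext u v
  simp only [Matrix.conjTranspose_apply, adjMat, Matrix.of_apply, star_trivial]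
  exact if_congr (G.adj_comm v u) rfl rfl

end Aux


section Comb
open Matrix

private noncomputable def armF (m : ℕ) (i : Fin (m-1)) : ℝ :=
  if (i:ℕ) = 0 ∨ (i:ℕ) = m-2 then Real.sqrt 5 / 2
  else if (i:ℕ) = 1 ∨ (i:ℕ) = m-3 then 1/2 else 0

private lemma armF_mk (m k : ℕ) (hk : k < m-1) : armF m ⟨k,hk⟩
    = if k = 0 ∨ k = m-2 then Real.sqrt 5/2 else if k = 1 ∨ k = m-3 then 1/2 else 0 := rfl

private lemma armF_nonneg (m : ℕ) (i : Fin (m-1)) : 0 ≤ armF m i := by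
  unfold armF; split_ifs <;> positivity

private lemma armF_sq (m : ℕ) (i : Fin (m-1)) :
    (armF m i)^2 ≤ (if (i:ℕ) = 0 ∨ (i:ℕ) = m-2 then (5/4:ℝ) else 0)
      + (if (i:ℕ) = 1 ∨ (i:ℕ) = m-3 then (1/4:ℝ) else 0) := by
  have h5 : Real.sqrt 5 ^ 2 = 5 := Real.sq_sqrt (by norm_num)
  unfold armF
  split_ifs <;> nlinarith [Real.sqrt_nonneg 5]

private lemma cardValEq (m k : ℕ) :
    (Finset.univ.filter (fun i : Fin m => (i:ℕ) = k)).card ≤ 1 := by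
  apply Finset.card_le_one.mpr
  intro a ha b hb
  simp only [Finset.mem_filter] at ha hb
  exact Fin.ext (ha.2.trans hb.2.symm)

private lemma cardOrLe (m k l : ℕ) :
    (Finset.univ.filter (fun i : Fin m => (i:ℕ) = k ∨ (i:ℕ) = l)).card ≤ 2 := by
  have hsub : (Finset.univ.filter (fun i : Fin m => (i:ℕ) = k ∨ (i:ℕ) = l)) ⊆
      (Finset.univ.filter (fun i : Fin m => (i:ℕ) = k)) ∪
      (Finset.univ.filter (fun i : Fin m => (i:ℕ) = l)) := by
    intro a
    simp only [Finset.mem_filter, Finset.mem_union]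
    tauto
  calc _ ≤ _ := Finset.card_le_card hsub
    _ ≤ _ + _ := Finset.card_union_le _ _
    _ ≤ 2 := by have := cardValEq m k; have := cardValEq m l; omega

private lemma armN (m : ℕ) : ∑ i : Fin (m-1), (armF m i)^2 ≤ 3 := by
  calc ∑ i : Fin (m-1), (armF m i)^2
      ≤ ∑ i : Fin (m-1), ((if (i:ℕ) = 0 ∨ (i:ℕ) = m-2 then (5/4:ℝ) else 0)
        + (if (i:ℕ) = 1 ∨ (i:ℕ) = m-3 then (1/4:ℝ) else 0)) :=
        Finset.sum_le_sum fun i _ => armF_sq m i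
    _ = (∑ i : Fin (m-1), (if (i:ℕ) = 0 ∨ (i:ℕ) = m-2 then (5/4:ℝ) else 0))
        + (∑ i : Fin (m-1), (if (i:ℕ) = 1 ∨ (i:ℕ) = m-3 then (1/4:ℝ) else 0)) :=
        Finset.sum_add_distrib
    _ ≤ 3 := by
        have h1 : (∑ i : Fin (m-1), (if (i:ℕ) = 0 ∨ (i:ℕ) = m-2 then (5/4:ℝ) else 0))
            = (Finset.univ.filter (fun i : Fin (m-1) => (i:ℕ) = 0 ∨ (i:ℕ) = m-2)).card • (5/4:ℝ) := by
          rw [← Finset.sum_filter, Finset.sum_const]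
        have h2 : (∑ i : Fin (m-1), (if (i:ℕ) = 1 ∨ (i:ℕ) = m-3 then (1/4:ℝ) else 0))
            = (Finset.univ.filter (fun i : Fin (m-1) => (i:ℕ) = 1 ∨ (i:ℕ) = m-3)).card • (1/4:ℝ) := by
          rw [← Finset.sum_filter, Finset.sum_const]
        rw [h1, h2]
        have c1 := cardOrLe (m-1) 0 (m-2)
        have c2 := cardOrLe (m-1) 1 (m-3)
        have e1 : ((Finset.univ.filter (fun i : Fin (m-1) => (i:ℕ) = 0 ∨ (i:ℕ) = m-2)).card • (5/4:ℝ)) ≤ 2 * (5/4) := by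
          rw [nsmul_eq_mul]
          apply mul_le_mul_of_nonneg_right _ (by norm_num)
          exact_mod_cast Nat.cast_le.mpr c1
        have e2 : ((Finset.univ.filter (fun i : Fin (m-1) => (i:ℕ) = 1 ∨ (i:ℕ) = m-3)).card • (1/4:ℝ)) ≤ 2 * (1/4) := by
          rw [nsmul_eq_mul]
          apply mul_le_mul_of_nonneg_right _ (by norm_num)
          exact_mod_cast Nat.cast_le.mpr c2
        linarith

private lemma centerSum (m : ℕ) (hm : 3 ≤ m) :
    ∑ j : Fin (m-1), (2:ℝ) * ((if (j:ℕ) = 0 ∨ (j:ℕ) = m-2 then (1:ℝ) else 0) * armF m j)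
      = 2 * Real.sqrt 5 := by
  have key : ∀ j : Fin (m-1), (2:ℝ) * ((if (j:ℕ) = 0 ∨ (j:ℕ) = m-2 then (1:ℝ) else 0) * armF m j)
      = (if (j:ℕ) = 0 ∨ (j:ℕ) = m-2 then Real.sqrt 5 else 0) := by
    intro j
    by_cases h : (j:ℕ) = 0 ∨ (j:ℕ) = m-2
    · rw [if_pos h, if_pos h, armF, if_pos h]; ring
    · rw [if_neg h, if_neg h]; ring
  rw [Finset.sum_congr rfl (fun j _ => key j), ← Finset.sum_filter, Finset.sum_const]
  have hcard : (Finset.univ.filter (fun j : Fin (m-1) => (j:ℕ) = 0 ∨ (j:ℕ) = m-2)).card = 2 := by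
    have hset : (Finset.univ.filter (fun j : Fin (m-1) => (j:ℕ) = 0 ∨ (j:ℕ) = m-2))
        = {(⟨0, by omega⟩ : Fin (m-1)), ⟨m-2, by omega⟩} := by
      ext j
      simp only [Finset.mem_filter, Finset.mem_univ, true_and, Finset.mem_insert,
        Finset.mem_singleton, Fin.ext_iff]
    rw [hset, Finset.card_insert_of_notMem, Finset.card_singleton]
    simp only [Finset.mem_singleton, Fin.ext_iff]
    omega
  rw [hcard, nsmul_eq_mul]; norm_num

private lemma armQ (m : ℕ) (hm : 3 ≤ m) :
    Real.sqrt 5 ≤ ∑ i : Fin (m-1), ∑ j : Fin (m-1),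
      armF m i * ((if (i ≠ j ∧ ((j:ℕ) = (i:ℕ)+1 ∨ (i:ℕ) = (j:ℕ)+1)) then (1:ℝ) else 0)
        * armF m j) := by
  have h5 : Real.sqrt 5 ^ 2 = 5 := Real.sq_sqrt (by norm_num)
  have h5n : (0:ℝ) ≤ Real.sqrt 5 := Real.sqrt_nonneg 5
  by_cases hm5 : 5 ≤ m
  · set t : Fin (m-1) × Fin (m-1) → ℝ := fun z =>
      armF m z.1 * ((if (z.1 ≠ z.2 ∧ ((z.2:ℕ) = (z.1:ℕ)+1 ∨ (z.1:ℕ) = (z.2:ℕ)+1)) then (1:ℝ)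
        else 0) * armF m z.2) with ht
    have hnn : ∀ z : Fin (m-1) × Fin (m-1), 0 ≤ t z := by
      intro z
      have := armF_nonneg m z.1
      have := armF_nonneg m z.2
      rw [ht]
      dsimp only
      split_ifs <;> nlinarith
    have harm0 : armF m ⟨0, by omega⟩ = Real.sqrt 5 / 2 := by
      unfold armF; exact if_pos (Or.inl rfl)
    have harmlast : armF m ⟨m-2, by omega⟩ = Real.sqrt 5 / 2 := by
      unfold armF; exact if_pos (Or.inr rfl)
    have harm1 : armF m ⟨1, by omega⟩ = 1/2 := by
      rw [armF_mk, if_neg (by omega), if_pos (Or.inl rfl)]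
    have harm3 : armF m ⟨m-3, by omega⟩ = 1/2 := by
      rw [armF_mk, if_neg (by omega), if_pos (Or.inr rfl)]
    set a : Fin (m-1) := ⟨0, by omega⟩
    set b : Fin (m-1) := ⟨1, by omega⟩
    set c : Fin (m-1) := ⟨m-3, by omega⟩
    set d : Fin (m-1) := ⟨m-2, by omega⟩
    have hsum : ∑ i : Fin (m-1), ∑ j : Fin (m-1),
        armF m i * ((if (i ≠ j ∧ ((j:ℕ) = (i:ℕ)+1 ∨ (i:ℕ) = (j:ℕ)+1)) then (1:ℝ) else 0)
          * armF m j) = ∑ z ∈ (Finset.univ : Finset (Fin (m-1) × Fin (m-1))), t z := by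
      rw [← Finset.univ_product_univ, Finset.sum_product]
    rw [hsum]
    have hS : ({(a,b), (b,a), (c,d), (d,c)} : Finset (Fin (m-1) × Fin (m-1))) ⊆ Finset.univ :=
      Finset.subset_univ _
    have hle := Finset.sum_le_sum_of_subset_of_nonneg hS (fun z _ _ => hnn z)
    refine le_trans ?_ hle
    have hd1 : ((a,b) : Fin (m-1) × Fin (m-1)) ∉
        ({(b,a), (c,d), (d,c)} : Finset (Fin (m-1) × Fin (m-1))) := by
      simp [Prod.ext_iff, Fin.ext_iff, a, b, c, d]; omega
    have hd2 : ((b,a) : Fin (m-1) × Fin (m-1)) ∉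
        ({(c,d), (d,c)} : Finset (Fin (m-1) × Fin (m-1))) := by
      simp [Prod.ext_iff, Fin.ext_iff, a, b, c, d]; omega
    have hd3 : ((c,d) : Fin (m-1) × Fin (m-1)) ∉
        ({(d,c)} : Finset (Fin (m-1) × Fin (m-1))) := by
      simp [Prod.ext_iff, Fin.ext_iff, a, b, c, d]; omega
    rw [show ({(a,b), (b,a), (c,d), (d,c)} : Finset (Fin (m-1) × Fin (m-1)))
        = insert (a,b) (insert (b,a) (insert (c,d) {(d,c)})) from rfl]
    rw [Finset.sum_insert hd1, Finset.sum_insert hd2, Finset.sum_insert hd3,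
      Finset.sum_singleton]
    have hab : t (a,b) = Real.sqrt 5 / 4 := by
      rw [ht]
      dsimp only
      rw [if_pos ⟨by simp [a, b, Fin.ext_iff], Or.inl (by simp [a, b])⟩, harm0, harm1]
      ring
    have hba : t (b,a) = Real.sqrt 5 / 4 := by
      rw [ht]
      dsimp only
      rw [if_pos ⟨by simp [a, b, Fin.ext_iff], Or.inr (by simp [a, b])⟩, harm0, harm1]
      ring
    have hcd : t (c,d) = Real.sqrt 5 / 4 := by
      rw [ht]
      dsimp only
      rw [if_pos ⟨by simp [c, d, Fin.ext_iff]; omega, Or.inl (show m-2 = m-3+1 by omega)⟩,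
        harmlast, harm3]
      ring
    have hdc : t (d,c) = Real.sqrt 5 / 4 := by
      rw [ht]
      dsimp only
      rw [if_pos ⟨by simp [c, d, Fin.ext_iff]; omega, Or.inr (show m-2 = m-3+1 by omega)⟩,
        harmlast, harm3]
      ring
    rw [hab, hba, hcd, hdc]
    ring_nf
    linarith
  · have hm34 : m = 3 ∨ m = 4 := by omega
    rcases hm34 with rfl | rfl
    · show Real.sqrt 5 ≤ ∑ i : Fin 2, ∑ j : Fin 2, _
      rw [Fin.sum_univ_two]
      rw [Fin.sum_univ_two, Fin.sum_univ_two]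
      norm_num [armF, Fin.ext_iff]
      nlinarith
    · show Real.sqrt 5 ≤ ∑ i : Fin 3, ∑ j : Fin 3, _
      rw [Fin.sum_univ_three]
      rw [Fin.sum_univ_three, Fin.sum_univ_three, Fin.sum_univ_three]
      norm_num [armF, Fin.ext_iff]
      nlinarith

private lemma sumOptSum {α β : Type*} [Fintype α] [Fintype β] (g : Option (α ⊕ β) → ℝ) :
    ∑ u, g u = g none + ((∑ a, g (some (Sum.inl a))) + (∑ b, g (some (Sum.inr b)))) := by
  rw [Fintype.sum_option, Fintype.sum_sum_type]

end Comb


open Matrix in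
/-- For `p,q ≥ 3`, the figure-eight graph `D(p,q)` satisfies
`λ₁(D(p,q)) ≥ 3/√2`. -/
theorem figureEight_eig_ge (p q : ℕ) (hp : 3 ≤ p) (hq : 3 ≤ q) :
    3 / Real.sqrt 2 ≤ graphEig (figureEight p q) 1 := by
  have hA : (adjMat (figureEight p q)).IsHermitian := adjMatHermitianAux _
  set G := figureEight p q with hG
  set A := adjMat G with hAdef
  set x : Option (Fin (p-1) ⊕ Fin (q-1)) → ℝ :=
    fun v => Option.elim v 2 (Sum.elim (armF p) (armF q)) with hx
  -- adjacency entries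
  have hAnl : ∀ j : Fin (p-1), A none (some (Sum.inl j))
      = if (j:ℕ) = 0 ∨ (j:ℕ) = p-2 then (1:ℝ) else 0 := by
    intro j
    have hiff : G.Adj none (some (Sum.inl j)) ↔ ((j:ℕ) = 0 ∨ (j:ℕ) = p-2) := by
      simp [hG, figureEight, SimpleGraph.fromRel_adj]
    simp only [hAdef, adjMat, Matrix.of_apply]
    exact if_congr hiff rfl rfl
  have hAnr : ∀ j : Fin (q-1), A none (some (Sum.inr j))
      = if (j:ℕ) = 0 ∨ (j:ℕ) = q-2 then (1:ℝ) else 0 := by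
    intro j
    have hiff : G.Adj none (some (Sum.inr j)) ↔ ((j:ℕ) = 0 ∨ (j:ℕ) = q-2) := by
      simp [hG, figureEight, SimpleGraph.fromRel_adj]
    simp only [hAdef, adjMat, Matrix.of_apply]
    exact if_congr hiff rfl rfl
  have hAln : ∀ j : Fin (p-1), A (some (Sum.inl j)) none
      = if (j:ℕ) = 0 ∨ (j:ℕ) = p-2 then (1:ℝ) else 0 := by
    intro j
    have hiff : G.Adj (some (Sum.inl j)) none ↔ ((j:ℕ) = 0 ∨ (j:ℕ) = p-2) := by
      simp [hG, figureEight, SimpleGraph.fromRel_adj]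
    simp only [hAdef, adjMat, Matrix.of_apply]
    exact if_congr hiff rfl rfl
  have hArn : ∀ j : Fin (q-1), A (some (Sum.inr j)) none
      = if (j:ℕ) = 0 ∨ (j:ℕ) = q-2 then (1:ℝ) else 0 := by
    intro j
    have hiff : G.Adj (some (Sum.inr j)) none ↔ ((j:ℕ) = 0 ∨ (j:ℕ) = q-2) := by
      simp [hG, figureEight, SimpleGraph.fromRel_adj]
    simp only [hAdef, adjMat, Matrix.of_apply]
    exact if_congr hiff rfl rfl
  have hAll : ∀ i j : Fin (p-1), A (some (Sum.inl i)) (some (Sum.inl j))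
      = if (i ≠ j ∧ ((j:ℕ) = (i:ℕ)+1 ∨ (i:ℕ) = (j:ℕ)+1)) then (1:ℝ) else 0 := by
    intro i j
    have hiff : G.Adj (some (Sum.inl i)) (some (Sum.inl j))
        ↔ (i ≠ j ∧ ((j:ℕ) = (i:ℕ)+1 ∨ (i:ℕ) = (j:ℕ)+1)) := by
      simp [hG, figureEight, SimpleGraph.fromRel_adj, Fin.ext_iff]
    simp only [hAdef, adjMat, Matrix.of_apply]
    exact if_congr hiff rfl rfl
  have hArr : ∀ i j : Fin (q-1), A (some (Sum.inr i)) (some (Sum.inr j))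
      = if (i ≠ j ∧ ((j:ℕ) = (i:ℕ)+1 ∨ (i:ℕ) = (j:ℕ)+1)) then (1:ℝ) else 0 := by
    intro i j
    have hiff : G.Adj (some (Sum.inr i)) (some (Sum.inr j))
        ↔ (i ≠ j ∧ ((j:ℕ) = (i:ℕ)+1 ∨ (i:ℕ) = (j:ℕ)+1)) := by
      simp [hG, figureEight, SimpleGraph.fromRel_adj, Fin.ext_iff]
    simp only [hAdef, adjMat, Matrix.of_apply]
    exact if_congr hiff rfl rfl
  -- nonnegativity
  have hxnn : ∀ v, 0 ≤ x v := by
    intro v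
    rcases v with _ | (i | i)
    · norm_num [hx]
    · simpa [hx] using armF_nonneg p i
    · simpa [hx] using armF_nonneg q i
  have hAnn : ∀ u v, 0 ≤ A u v := by
    intro u v
    simp only [hAdef, adjMat, Matrix.of_apply]
    split_ifs <;> norm_num
  have htnn : ∀ u v, 0 ≤ x u * (A u v * x v) := fun u v =>
    mul_nonneg (hxnn u) (mul_nonneg (hAnn u v) (hxnn v))
  -- norm bounds
  have hNexp : x ⬝ᵥ x = ∑ v, x v * x v := rfl
  have harmNp : ∑ a : Fin (p-1), x (some (Sum.inl a)) * x (some (Sum.inl a)) ≤ 3 := by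
    have key : ∀ a : Fin (p-1), x (some (Sum.inl a)) * x (some (Sum.inl a)) = (armF p a)^2 := by
      intro a; simp [hx, sq]
    rw [Finset.sum_congr rfl (fun a _ => key a)]
    exact armN p
  have harmNq : ∑ b : Fin (q-1), x (some (Sum.inr b)) * x (some (Sum.inr b)) ≤ 3 := by
    have key : ∀ b : Fin (q-1), x (some (Sum.inr b)) * x (some (Sum.inr b)) = (armF q b)^2 := by
      intro b; simp [hx, sq]
    rw [Finset.sum_congr rfl (fun b _ => key b)]
    exact armN q
  have hxnone : x none * x none = 4 := by norm_num [hx]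
  have hsump : (0:ℝ) ≤ ∑ a : Fin (p-1), x (some (Sum.inl a)) * x (some (Sum.inl a)) :=
    Finset.sum_nonneg fun a _ => mul_self_nonneg _
  have hsumq : (0:ℝ) ≤ ∑ b : Fin (q-1), x (some (Sum.inr b)) * x (some (Sum.inr b)) :=
    Finset.sum_nonneg fun b _ => mul_self_nonneg _
  have hN10 : x ⬝ᵥ x ≤ 10 := by
    rw [hNexp, sumOptSum (fun v => x v * x v)]
    linarith
  have hN4 : (4:ℝ) ≤ x ⬝ᵥ x := by
    rw [hNexp, sumOptSum (fun v => x v * x v)]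
    linarith
  -- quadratic form lower bound
  have hQexp : x ⬝ᵥ (A *ᵥ x) = ∑ u, ∑ v, x u * (A u v * x v) := by
    simp only [dotProduct, Matrix.mulVec, Finset.mul_sum]
  have P1 : ∑ c : Fin (p-1), x none * (A none (some (Sum.inl c)) * x (some (Sum.inl c)))
      = 2 * Real.sqrt 5 := by
    have key : ∀ c, x none * (A none (some (Sum.inl c)) * x (some (Sum.inl c)))
        = 2 * ((if (c:ℕ) = 0 ∨ (c:ℕ) = p-2 then (1:ℝ) else 0) * armF p c) := by
      intro c; rw [hAnl c]; simp [hx]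
    rw [Finset.sum_congr rfl (fun c _ => key c)]
    exact centerSum p hp
  have P2 : ∑ d : Fin (q-1), x none * (A none (some (Sum.inr d)) * x (some (Sum.inr d)))
      = 2 * Real.sqrt 5 := by
    have key : ∀ d, x none * (A none (some (Sum.inr d)) * x (some (Sum.inr d)))
        = 2 * ((if (d:ℕ) = 0 ∨ (d:ℕ) = q-2 then (1:ℝ) else 0) * armF q d) := by
      intro d; rw [hAnr d]; simp [hx]
    rw [Finset.sum_congr rfl (fun d _ => key d)]
    exact centerSum q hq
  have P3 : ∑ a : Fin (p-1), x (some (Sum.inl a)) * (A (some (Sum.inl a)) none * x none)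
      = 2 * Real.sqrt 5 := by
    have key : ∀ a, x (some (Sum.inl a)) * (A (some (Sum.inl a)) none * x none)
        = 2 * ((if (a:ℕ) = 0 ∨ (a:ℕ) = p-2 then (1:ℝ) else 0) * armF p a) := by
      intro a; rw [hAln a]; simp [hx]; ring
    rw [Finset.sum_congr rfl (fun a _ => key a)]
    exact centerSum p hp
  have P4 : ∑ b : Fin (q-1), x (some (Sum.inr b)) * (A (some (Sum.inr b)) none * x none)
      = 2 * Real.sqrt 5 := by
    have key : ∀ b, x (some (Sum.inr b)) * (A (some (Sum.inr b)) none * x none)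
        = 2 * ((if (b:ℕ) = 0 ∨ (b:ℕ) = q-2 then (1:ℝ) else 0) * armF q b) := by
      intro b; rw [hArn b]; simp [hx]; ring
    rw [Finset.sum_congr rfl (fun b _ => key b)]
    exact centerSum q hq
  have P5 : Real.sqrt 5 ≤ ∑ a : Fin (p-1), ∑ c : Fin (p-1),
      x (some (Sum.inl a)) * (A (some (Sum.inl a)) (some (Sum.inl c)) * x (some (Sum.inl c))) := by
    have key : ∀ a c, x (some (Sum.inl a)) * (A (some (Sum.inl a)) (some (Sum.inl c))
        * x (some (Sum.inl c)))
        = armF p a * ((if (a ≠ c ∧ ((c:ℕ) = (a:ℕ)+1 ∨ (a:ℕ) = (c:ℕ)+1)) then (1:ℝ) else 0)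
          * armF p c) := by
      intro a c; rw [hAll a c]; simp [hx]
    rw [Finset.sum_congr rfl (fun a _ => Finset.sum_congr rfl (fun c _ => key a c))]
    exact armQ p hp
  have P6 : Real.sqrt 5 ≤ ∑ b : Fin (q-1), ∑ d : Fin (q-1),
      x (some (Sum.inr b)) * (A (some (Sum.inr b)) (some (Sum.inr d)) * x (some (Sum.inr d))) := by
    have key : ∀ b d, x (some (Sum.inr b)) * (A (some (Sum.inr b)) (some (Sum.inr d))
        * x (some (Sum.inr d)))
        = armF q b * ((if (b ≠ d ∧ ((d:ℕ) = (b:ℕ)+1 ∨ (b:ℕ) = (d:ℕ)+1)) then (1:ℝ) else 0)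
          * armF q d) := by
      intro b d; rw [hArr b d]; simp [hx]
    rw [Finset.sum_congr rfl (fun b _ => Finset.sum_congr rfl (fun d _ => key b d))]
    exact armQ q hq
  have hQ10 : 10 * Real.sqrt 5 ≤ x ⬝ᵥ (A *ᵥ x) := by
    rw [hQexp, sumOptSum (fun u => ∑ v, x u * (A u v * x v)),
      sumOptSum (fun v => x none * (A none v * x v))]
    have expl : ∀ a : Fin (p-1), (∑ v, x (some (Sum.inl a)) * (A (some (Sum.inl a)) v * x v))
        = x (some (Sum.inl a)) * (A (some (Sum.inl a)) none * x none)
          + ((∑ c, x (some (Sum.inl a)) * (A (some (Sum.inl a)) (some (Sum.inl c))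
              * x (some (Sum.inl c))))
            + (∑ d, x (some (Sum.inl a)) * (A (some (Sum.inl a)) (some (Sum.inr d))
              * x (some (Sum.inr d))))) :=
      fun a => sumOptSum _
    have expr' : ∀ b : Fin (q-1), (∑ v, x (some (Sum.inr b)) * (A (some (Sum.inr b)) v * x v))
        = x (some (Sum.inr b)) * (A (some (Sum.inr b)) none * x none)
          + ((∑ c, x (some (Sum.inr b)) * (A (some (Sum.inr b)) (some (Sum.inl c))
              * x (some (Sum.inl c))))
            + (∑ d, x (some (Sum.inr b)) * (A (some (Sum.inr b)) (some (Sum.inr d))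
              * x (some (Sum.inr d))))) :=
      fun b => sumOptSum _
    rw [Finset.sum_congr rfl (fun a _ => expl a), Finset.sum_congr rfl (fun b _ => expr' b)]
    rw [Finset.sum_add_distrib, Finset.sum_add_distrib, Finset.sum_add_distrib,
      Finset.sum_add_distrib]
    have hnn0 : 0 ≤ x none * (A none none * x none) := htnn _ _
    have hcross1 : (0:ℝ) ≤ ∑ a : Fin (p-1), ∑ d : Fin (q-1),
        x (some (Sum.inl a)) * (A (some (Sum.inl a)) (some (Sum.inr d)) * x (some (Sum.inr d))) :=
      Finset.sum_nonneg fun a _ => Finset.sum_nonneg fun d _ => htnn _ _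
    have hcross2 : (0:ℝ) ≤ ∑ b : Fin (q-1), ∑ c : Fin (p-1),
        x (some (Sum.inr b)) * (A (some (Sum.inr b)) (some (Sum.inl c)) * x (some (Sum.inl c))) :=
      Finset.sum_nonneg fun b _ => Finset.sum_nonneg fun c _ => htnn _ _
    linarith
  -- final combination
  haveI : Nonempty (Option (Fin (p-1) ⊕ Fin (q-1))) := ⟨none⟩
  have hray := rayleighAux A hA x
  have h35 : 3 / Real.sqrt 2 ≤ Real.sqrt 5 := by
    have hs2 : (0:ℝ) < Real.sqrt 2 := Real.sqrt_pos.mpr (by norm_num)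
    rw [div_le_iff₀ hs2]
    have h10 : Real.sqrt 5 * Real.sqrt 2 = Real.sqrt 10 := by
      rw [← Real.sqrt_mul (by norm_num : (0:ℝ) ≤ 5)]; norm_num
    rw [h10, show (3:ℝ) = Real.sqrt 9 by
      rw [show (9:ℝ) = 3^2 by norm_num, Real.sqrt_sq (by norm_num)]]
    exact Real.sqrt_le_sqrt (by norm_num)
  have hchain : (3 / Real.sqrt 2) * (x ⬝ᵥ x) ≤ eig A 1 * (x ⬝ᵥ x) := by
    calc (3 / Real.sqrt 2) * (x ⬝ᵥ x) ≤ Real.sqrt 5 * (x ⬝ᵥ x) :=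
          mul_le_mul_of_nonneg_right h35 (le_trans (by norm_num) hN4)
      _ ≤ Real.sqrt 5 * 10 := mul_le_mul_of_nonneg_left hN10 (Real.sqrt_nonneg 5)
      _ = 10 * Real.sqrt 5 := mul_comm _ _
      _ ≤ x ⬝ᵥ (A *ᵥ x) := hQ10
      _ ≤ eig A 1 * (x ⬝ᵥ x) := hray
  have hNpos : (0:ℝ) < x ⬝ᵥ x := lt_of_lt_of_le (by norm_num) hN4
  exact le_of_mul_le_mul_right hchain hNpos
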